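/- Let L be a finite distributive lattice with rank function r, μ : L → ℝ≥0 log-supermodular, and f, g : L → ℝ≥0 both increasing (or both decreasing). Then the polynomial (∑_x μ(x)q^{r(x)})(∑_x f(x)g(x)μ(x)q^{r(x)}) − (∑_x f(x)μ(x)q^{r(x)})(∑_x g(x)μ(x)q^{r(x)}) in the variable q has all coefficients non-negative. -/

import Mathlib

open Polynomial Finset FinsetFamily

/-- The rank (height) of an element: the length of the longest chain having it
as maximal element. -/
noncomputable def latticeRank {L : Type*} [Preorder L] (a : L) : ℕ :=
  sSup {k | ∃ c : Fin (k + 1) → L, StrictMono c ∧ c (Fin.last k) = a}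

namespace QFKG

variable {L : Type*} [DistribLattice L] [Fintype L]

attribute [local instance] Classical.propDecidable
attribute [local instance] Classical.decEq

open Classical in
noncomputable def jset (x : L) : Finset L := univ.filter (fun j => SupIrred j ∧ j ≤ x)

lemma mem_jset {x j : L} : j ∈ jset x ↔ SupIrred j ∧ j ≤ x := by
  simp [jset]

open Classical in
noncomputable def jcount (x : L) : ℕ := (jset x).card

lemma le_of_jset_subset [Nonempty L] {x y : L} (h : jset x ⊆ jset y) : x ≤ y := by
  haveI := Fintype.toOrderBot L
  obtain ⟨s, rfl, hs⟩ := exists_supIrred_decomposition x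
  exact Finset.sup_le fun b hb =>
    (mem_jset.1 (h (mem_jset.2 ⟨hs hb, Finset.le_sup (f := id) hb⟩))).2

lemma jset_mono {x y : L} (h : x ≤ y) : jset x ⊆ jset y := fun j hj => by
  rcases mem_jset.1 hj with ⟨h1, h2⟩; exact mem_jset.2 ⟨h1, h2.trans h⟩

lemma jcount_strictMono [Nonempty L] : StrictMono (jcount (L := L)) := by
  intro x y hxy
  apply Finset.card_lt_card
  rw [Finset.ssubset_def]
  refine ⟨jset_mono hxy.le, fun hsub => ?_⟩
  exact absurd (le_of_jset_subset hsub) (not_le_of_gt hxy)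

lemma jset_sup (x y : L) : jset (x ⊔ y) = jset x ∪ jset y := by
  classical
  ext j
  simp only [mem_jset, Finset.mem_union]
  constructor
  · rintro ⟨hj, hle⟩
    rcases hj.supPrime.le_sup.1 hle with h | h
    · exact Or.inl ⟨hj, h⟩
    · exact Or.inr ⟨hj, h⟩
  · rintro (⟨hj, h⟩ | ⟨hj, h⟩)
    · exact ⟨hj, le_sup_of_le_left h⟩
    · exact ⟨hj, le_sup_of_le_right h⟩

lemma jset_inf (x y : L) : jset (x ⊓ y) = jset x ∩ jset y := by
  classical
  ext j
  simp only [mem_jset, Finset.mem_inter, le_inf_iff]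
  tauto

lemma jcount_modular (x y : L) : jcount x + jcount y = jcount (x ⊔ y) + jcount (x ⊓ y) := by
  classical
  unfold jcount
  rw [jset_sup, jset_inf]
  exact (Finset.card_union_add_card_inter _ _).symm

lemma jcount_covby [Nonempty L] {x y : L} (h : y ⋖ x) : jcount x ≤ jcount y + 1 := by
  classical
  by_cases hsub : jset x ⊆ jset y
  · exact le_trans (Finset.card_le_card hsub) (Nat.le_succ _)
  obtain ⟨j₀, hj₀x, hj₀y⟩ := Finset.not_subset.1 hsub
  have key : ∀ j ∈ jset x, j ∉ jset y → y ⊔ j = x := by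
    intro j hj hjy
    rcases mem_jset.1 hj with ⟨hji, hjx⟩
    have h1 : y < y ⊔ j := by
      rcases (le_sup_left : y ≤ y ⊔ j).lt_or_eq with h' | h'
      · exact h'
      · exact absurd (mem_jset.2 ⟨hji, le_sup_right.trans h'.symm.le⟩) hjy
    have h2 : y ⊔ j ≤ x := sup_le h.1.le hjx
    rcases h2.lt_or_eq with h' | h'
    · exact absurd h' (h.2 h1)
    · exact h'
  have hx0 := key j₀ hj₀x hj₀y
  rcases mem_jset.1 hj₀x with ⟨hj₀i, hj₀le⟩
  have hsubs : jset x ⊆ jset y ∪ {j₀} := by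
    intro j hj
    rcases mem_jset.1 hj with ⟨hji, hjx⟩
    by_cases hjy : j ≤ y
    · exact Finset.mem_union_left _ (mem_jset.2 ⟨hji, hjy⟩)
    · have hjy' : j ∉ jset y := fun hh => hjy (mem_jset.1 hh).2
      have hjj₀ : j ≤ j₀ :=
        (hji.supPrime.le_sup.1 (hx0 ▸ hjx)).resolve_left hjy
      have hx1 := key j hj hjy'
      have hj₀j : j₀ ≤ j :=
        (hj₀i.supPrime.le_sup.1 (hx1 ▸ hj₀le)).resolve_left (fun hh => hj₀y (mem_jset.2 ⟨hj₀i, hh⟩))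
      have : j = j₀ := le_antisymm hjj₀ hj₀j
      exact Finset.mem_union_right _ (by simp [this])
  calc jcount x ≤ (jset y ∪ {j₀}).card := Finset.card_le_card hsubs
    _ ≤ jcount y + 1 := le_trans (Finset.card_union_le _ _) (by simp [jcount])


section Chains
variable [Nonempty L]

lemma const_chain_strictMono (x : L) : StrictMono (fun _ : Fin 1 => x) := by
  intro i j hij
  exact absurd (Subsingleton.elim i j) hij.ne

lemma exists_chain : ∀ (n : ℕ) (x : L), jcount x = n →
    ∃ c : Fin (n + 1) → L, StrictMono c ∧ c (Fin.last n) = x := by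
  intro n
  induction n with
  | zero => exact fun x _ => ⟨fun _ => x, const_chain_strictMono x, rfl⟩
  | succ n ih =>
    intro x hx
    have hne : ∃ y, y < x := by
      by_contra hmin
      push_neg at hmin
      have hminx : IsMin x := fun b hb => ((hb.lt_or_eq.resolve_left (hmin b)).symm).le
      -- jset x nonempty
      obtain ⟨j, hj⟩ := Finset.card_pos.1
        (show 0 < (jset x).card from by
          have hc : (jset x).card = n + 1 := hx
          omega)
      rcases (mem_jset (x := x)).1 hj with ⟨hji, hjle⟩
      exact hji.not_isMin (fun b hb => hjle.trans (hminx (hb.trans hjle)))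
    obtain ⟨y, hyx⟩ := hne
    obtain ⟨z, hz, hzmax⟩ : ∃ z ∈ univ.filter (· < x), ∀ c ∈ univ.filter (· < x), ¬ z < c := by
      obtain ⟨z, hz, hm⟩ := Finset.exists_maximal (s := univ.filter (· < x)) ⟨y, by simp [hyx]⟩
      exact ⟨z, hz, fun c hc hzc => hzc.not_ge (hm hc hzc.le)⟩
    simp only [Finset.mem_filter, Finset.mem_univ, true_and] at hz
    have hcov : z ⋖ x := by
      refine ⟨hz, fun c hzc hcx => ?_⟩
      exact hzmax c (by simp [hcx]) hzc
    have h1 : jcount z < jcount x := jcount_strictMono hz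
    have h2 : jcount x ≤ jcount z + 1 := jcount_covby hcov
    have hz' : jcount z = n := by omega
    obtain ⟨c, hc, hlast⟩ := ih z hz'
    refine ⟨Fin.snoc c x, ?_, by simp⟩
    intro i j hij
    induction j using Fin.lastCases with
    | last =>
      obtain ⟨i', rfl⟩ := Fin.eq_castSucc_of_ne_last (ne_of_lt hij)
      rw [Fin.snoc_castSucc, Fin.snoc_last]
      calc c i' ≤ c (Fin.last n) := hc.monotone (Fin.le_last _)
        _ = z := hlast
        _ < x := hz
    | cast j' =>
      obtain ⟨i', rfl⟩ := Fin.eq_castSucc_of_ne_last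
        (ne_of_lt (lt_of_lt_of_le hij (Fin.le_last _)))
      rw [Fin.snoc_castSucc, Fin.snoc_castSucc]
      exact hc (Fin.castSucc_lt_castSucc_iff.1 hij)

lemma latticeRank_eq_jcount (x : L) : latticeRank x = jcount x := by
  have hub : ∀ k ∈ {k | ∃ c : Fin (k + 1) → L, StrictMono c ∧ c (Fin.last k) = x},
      k ≤ jcount x := by
    rintro k ⟨c, hc, hlast⟩
    have main : ∀ m : ℕ, ∀ hm : m < k + 1, m ≤ jcount (c ⟨m, hm⟩) := by
      intro m
      induction m with
      | zero => exact fun _ => Nat.zero_le _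
      | succ m ihm =>
        intro hm
        have hm' : m < k + 1 := Nat.lt_of_succ_lt hm
        have h1 := ihm hm'
        have h2 : jcount (c ⟨m, hm'⟩) < jcount (c ⟨m + 1, hm⟩) :=
          jcount_strictMono (hc (by simp [Fin.lt_def]))
        omega
    have := main k (Nat.lt_succ_self k)
    rwa [show (⟨k, Nat.lt_succ_self k⟩ : Fin (k + 1)) = Fin.last k from rfl, hlast] at this
  apply le_antisymm
  · exact csSup_le ⟨0, fun _ => x, const_chain_strictMono x, rfl⟩ hub
  · exact le_csSup ⟨jcount x, fun k hk => hub k hk⟩ (exists_chain (jcount x) x rfl)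

end Chains

lemma rank_modular [Nonempty L] (x y : L) :
    latticeRank x + latticeRank y = latticeRank (x ⊔ y) + latticeRank (x ⊓ y) := by
  rw [latticeRank_eq_jcount, latticeRank_eq_jcount, latticeRank_eq_jcount,
    latticeRank_eq_jcount]
  exact jcount_modular x y

lemma fkg_zero (S : Finset L)
    (hSinf : ∀ x ∈ S, ∀ y ∈ S, x ⊓ y ∈ S) (hSsup : ∀ x ∈ S, ∀ y ∈ S, x ⊔ y ∈ S)
    (ν φ ψ : L → ℝ) (hν0 : ∀ x ∈ S, 0 ≤ ν x)
    (hν : ∀ x ∈ S, ∀ y ∈ S, ν x * ν y ≤ ν (x ⊓ y) * ν (x ⊔ y))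
    (hφ : ∀ x ∈ S, ∀ y ∈ S, x ≤ y → φ x ≤ φ y)
    (hψ : ∀ x ∈ S, ∀ y ∈ S, x ≤ y → ψ x ≤ ψ y)
    (hφ0 : ∑ x ∈ S, ν x * φ x = 0) (hψ0 : ∑ x ∈ S, ν x * ψ x = 0) :
    0 ≤ ∑ x ∈ S, ν x * (φ x * ψ x) := by
  classical
  set c : ℝ := ∑ x ∈ S, (|φ x| + |ψ x|) with hc
  have hcb : ∀ x ∈ S, |φ x| + |ψ x| ≤ c := by
    intro x hx
    exact Finset.single_le_sum (f := fun x => |φ x| + |ψ x|)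
      (fun i _ => by positivity) hx
  have hcφ : ∀ x ∈ S, 0 ≤ φ x + c := by
    intro x hx
    have h1 := hcb x hx
    have h2 := neg_abs_le (φ x)
    have h3 := abs_nonneg (ψ x)
    linarith
  have hcψ : ∀ x ∈ S, 0 ≤ ψ x + c := by
    intro x hx
    have h1 := hcb x hx
    have h2 := neg_abs_le (ψ x)
    have h3 := abs_nonneg (φ x)
    linarith
  set f₁ : L → ℝ := fun x => if x ∈ S then ν x * (φ x + c) else 0 with hf₁
  set f₂ : L → ℝ := fun x => if x ∈ S then ν x * (ψ x + c) else 0 with hf₂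
  set f₃ : L → ℝ := fun x => if x ∈ S then ν x else 0 with hf₃
  set f₄ : L → ℝ := fun x => if x ∈ S then ν x * ((φ x + c) * (ψ x + c)) else 0 with hf₄
  have h₁ : (0 : L → ℝ) ≤ f₁ := by
    intro x
    by_cases h : x ∈ S
    · simpa [hf₁, h] using mul_nonneg (hν0 x h) (hcφ x h)
    · simp [hf₁, h]
  have h₂ : (0 : L → ℝ) ≤ f₂ := by
    intro x
    by_cases h : x ∈ S
    · simpa [hf₂, h] using mul_nonneg (hν0 x h) (hcψ x h)
    · simp [hf₂, h]
  have h₃ : (0 : L → ℝ) ≤ f₃ := by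
    intro x
    by_cases h : x ∈ S
    · simpa [hf₃, h] using hν0 x h
    · simp [hf₃, h]
  have h₄ : (0 : L → ℝ) ≤ f₄ := by
    intro x
    by_cases h : x ∈ S
    · simpa [hf₄, h] using
        mul_nonneg (hν0 x h) (mul_nonneg (hcφ x h) (hcψ x h))
    · simp [hf₄, h]
  have hmain : ∀ a b : L, f₁ a * f₂ b ≤ f₃ (a ⊓ b) * f₄ (a ⊔ b) := by
    intro a b
    by_cases ha : a ∈ S
    · by_cases hb : b ∈ S
      · have hab1 : a ⊓ b ∈ S := hSinf a ha b hb
        have hab2 : a ⊔ b ∈ S := hSsup a ha b hb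
        simp only [hf₁, hf₂, hf₃, hf₄, if_pos ha, if_pos hb, if_pos hab1, if_pos hab2]
        have m1 := hν a ha b hb
        have m2 : φ a + c ≤ φ (a ⊔ b) + c := by
          have := hφ a ha _ hab2 le_sup_left; linarith
        have m3 : ψ b + c ≤ ψ (a ⊔ b) + c := by
          have := hψ b hb _ hab2 le_sup_right; linarith
        calc ν a * (φ a + c) * (ν b * (ψ b + c))
            = (ν a * ν b) * ((φ a + c) * (ψ b + c)) := by ring
          _ ≤ (ν (a ⊓ b) * ν (a ⊔ b)) * ((φ (a ⊔ b) + c) * (ψ (a ⊔ b) + c)) := by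
              refine mul_le_mul m1 (mul_le_mul m2 m3 (hcψ b hb) ((hcφ a ha).trans m2)) ?_ ?_
              · exact mul_nonneg (hcφ a ha) (hcψ b hb)
              · exact mul_nonneg (hν0 _ hab1) (hν0 _ hab2)
          _ = ν (a ⊓ b) * (ν (a ⊔ b) * ((φ (a ⊔ b) + c) * (ψ (a ⊔ b) + c))) := by ring
      · have : f₂ b = 0 := by simp [hf₂, hb]
        rw [this, mul_zero]
        exact mul_nonneg (h₃ _) (h₄ _)
    · have : f₁ a = 0 := by simp [hf₁, ha]
      rw [this, zero_mul]
      exact mul_nonneg (h₃ _) (h₄ _)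
  have key := four_functions_theorem f₁ f₂ f₃ f₄ h₁ h₂ h₃ h₄ hmain S S
  have hSS1 : S ⊼ S = S := by
    ext z
    rw [Finset.mem_infs]
    constructor
    · rintro ⟨x, hx, y, hy, rfl⟩; exact hSinf x hx y hy
    · intro hz; exact ⟨z, hz, z, hz, inf_idem z⟩
  have hSS2 : S ⊻ S = S := by
    ext z
    rw [Finset.mem_sups]
    constructor
    · rintro ⟨x, hx, y, hy, rfl⟩; exact hSsup x hx y hy
    · intro hz; exact ⟨z, hz, z, hz, sup_idem z⟩
  rw [hSS1, hSS2] at key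
  have e₁ : ∑ x ∈ S, f₁ x = c * ∑ x ∈ S, ν x := by
    rw [Finset.sum_congr rfl (fun x hx =>
      show f₁ x = ν x * φ x + c * ν x by rw [hf₁]; simp only [if_pos hx]; ring)]
    rw [Finset.sum_add_distrib, hφ0, ← Finset.mul_sum, zero_add]
  have e₂ : ∑ x ∈ S, f₂ x = c * ∑ x ∈ S, ν x := by
    rw [Finset.sum_congr rfl (fun x hx =>
      show f₂ x = ν x * ψ x + c * ν x by rw [hf₂]; simp only [if_pos hx]; ring)]
    rw [Finset.sum_add_distrib, hψ0, ← Finset.mul_sum, zero_add]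
  have e₃ : ∑ x ∈ S, f₃ x = ∑ x ∈ S, ν x :=
    Finset.sum_congr rfl (fun x hx => by rw [hf₃]; simp only [if_pos hx])
  have e₄ : ∑ x ∈ S, f₄ x = (∑ x ∈ S, ν x * (φ x * ψ x)) + c ^ 2 * ∑ x ∈ S, ν x := by
    rw [Finset.sum_congr rfl (fun x hx =>
      show f₄ x = ν x * (φ x * ψ x) + (c * (ν x * φ x) + (c * (ν x * ψ x) + c ^ 2 * ν x)) by
        rw [hf₄]; simp only [if_pos hx]; ring)]
    rw [Finset.sum_add_distrib, Finset.sum_add_distrib, Finset.sum_add_distrib,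
      ← Finset.mul_sum, ← Finset.mul_sum, ← Finset.mul_sum, hφ0, hψ0]
    ring
  rw [e₁, e₂, e₃, e₄] at key
  set T := ∑ x ∈ S, ν x with hT
  have hT0 : 0 ≤ T := Finset.sum_nonneg hν0
  rcases hT0.eq_or_lt with hT1 | hTpos
  · have hz : ∀ x ∈ S, ν x = 0 :=
      (Finset.sum_eq_zero_iff_of_nonneg hν0).1 hT1.symm
    rw [Finset.sum_eq_zero (fun x hx => by rw [hz x hx, zero_mul])]
  · by_contra hneg
    push_neg at hneg
    nlinarith [key, mul_pos hTpos (neg_pos.2 hneg)]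


lemma coeff_mul_sum (r : L → ℕ) (a b : L → ℝ) (k : ℕ) :
    ((∑ x : L, C (a x) * X ^ r x) * (∑ x : L, C (b x) * X ^ r x)).coeff k
      = ∑ p ∈ (univ ×ˢ univ : Finset (L × L)),
          if k = r p.1 + r p.2 then a p.1 * b p.2 else 0 := by
  rw [Finset.sum_mul_sum, Finset.sum_product]
  rw [Polynomial.finset_sum_coeff]
  refine Finset.sum_congr rfl fun x _ => ?_
  rw [Polynomial.finset_sum_coeff]
  refine Finset.sum_congr rfl fun y _ => ?_
  rw [mul_mul_mul_comm, ← C_mul, ← pow_add, coeff_C_mul, coeff_X_pow]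
  simp [mul_ite]


noncomputable def cpl (a b x : L) : L :=
  if h : ∃ y, x ⊓ y = a ∧ x ⊔ y = b then h.choose else x

noncomputable def compS (a b : L) : Finset L :=
  univ.filter (fun x => x ⊓ cpl a b x = a ∧ x ⊔ cpl a b x = b)

variable {a b : L}

lemma cpl_spec {x : L} (h : ∃ y, x ⊓ y = a ∧ x ⊔ y = b) :
    x ⊓ cpl a b x = a ∧ x ⊔ cpl a b x = b := by
  rw [cpl, dif_pos h]
  exact h.choose_spec

lemma mem_compS {x : L} : x ∈ compS a b ↔ (x ⊓ cpl a b x = a ∧ x ⊔ cpl a b x = b) := by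
  simp [compS]

lemma mem_compS' {x : L} : x ∈ compS a b ↔ ∃ y, x ⊓ y = a ∧ x ⊔ y = b := by
  rw [mem_compS]
  exact ⟨fun h => ⟨cpl a b x, h⟩, fun h => cpl_spec h⟩

lemma compl_uniq {x y y' : L} (h1 : x ⊓ y = a) (h2 : x ⊔ y = b)
    (h3 : x ⊓ y' = a) (h4 : x ⊔ y' = b) : y = y' := by
  refine eq_of_inf_eq_sup_eq (a := x) ?_ ?_
  · rw [inf_comm y x, inf_comm y' x, h1, h3]
  · rw [sup_comm y x, sup_comm y' x, h2, h4]

lemma cpl_eq {x y : L} (h1 : x ⊓ y = a) (h2 : x ⊔ y = b) : cpl a b x = y := by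
  obtain ⟨h3, h4⟩ := cpl_spec ⟨y, h1, h2⟩
  exact compl_uniq h3 h4 h1 h2

section members
variable {x : L} (hx : x ∈ compS a b)
include hx

lemma a_le : a ≤ x := (mem_compS.1 hx).1.symm.trans_le inf_le_left
lemma a_le_cpl : a ≤ cpl a b x := (mem_compS.1 hx).1.symm.trans_le inf_le_right
lemma le_b : x ≤ b := le_sup_left.trans_eq (mem_compS.1 hx).2
lemma cpl_le_b : cpl a b x ≤ b := le_sup_right.trans_eq (mem_compS.1 hx).2

lemma cpl_mem : cpl a b x ∈ compS a b := by
  obtain ⟨h1, h2⟩ := mem_compS.1 hx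
  exact mem_compS'.2 ⟨x, by rw [inf_comm]; exact h1, by rw [sup_comm]; exact h2⟩

lemma cpl_cpl : cpl a b (cpl a b x) = x := by
  obtain ⟨h1, h2⟩ := mem_compS.1 hx
  exact cpl_eq (by rw [inf_comm]; exact h1) (by rw [sup_comm]; exact h2)

end members

lemma cpl_anti {x y : L} (hx : x ∈ compS a b) (hy : y ∈ compS a b) (hxy : x ≤ y) :
    cpl a b y ≤ cpl a b x := by
  obtain ⟨hx1, hx2⟩ := mem_compS.1 hx
  obtain ⟨hy1, hy2⟩ := mem_compS.1 hy
  have h1 : cpl a b y ⊓ x ≤ cpl a b x := by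
    calc cpl a b y ⊓ x ≤ cpl a b y ⊓ y := inf_le_inf_left _ hxy
      _ = a := by rw [inf_comm]; exact hy1
      _ ≤ cpl a b x := a_le_cpl hx
  calc cpl a b y = cpl a b y ⊓ b := (inf_eq_left.2 (cpl_le_b hy)).symm
    _ = cpl a b y ⊓ (x ⊔ cpl a b x) := by rw [hx2]
    _ = (cpl a b y ⊓ x) ⊔ (cpl a b y ⊓ cpl a b x) := inf_sup_left _ _ _
    _ ≤ cpl a b x := sup_le h1 inf_le_right

lemma clos_sup {x y : L} (hx : x ∈ compS a b) (hy : y ∈ compS a b) :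
    (x ⊔ y) ⊓ (cpl a b x ⊓ cpl a b y) = a ∧ (x ⊔ y) ⊔ (cpl a b x ⊓ cpl a b y) = b := by
  obtain ⟨hx1, hx2⟩ := mem_compS.1 hx
  obtain ⟨hy1, hy2⟩ := mem_compS.1 hy
  constructor
  · apply le_antisymm
    · rw [inf_sup_right]
      apply sup_le
      · calc x ⊓ (cpl a b x ⊓ cpl a b y) ≤ x ⊓ cpl a b x := inf_le_inf_left _ inf_le_left
          _ = a := hx1
      · calc y ⊓ (cpl a b x ⊓ cpl a b y) ≤ y ⊓ cpl a b y := inf_le_inf_left _ inf_le_right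
          _ = a := hy1
    · exact le_inf (le_sup_of_le_left (a_le hx)) (le_inf (a_le_cpl hx) (a_le_cpl hy))
  · apply le_antisymm
    · exact sup_le (sup_le (le_b hx) (le_b hy)) (inf_le_left.trans (cpl_le_b hx))
    · rw [sup_inf_left]
      refine le_inf ?_ ?_
      · calc b = x ⊔ cpl a b x := hx2.symm
          _ ≤ (x ⊔ y) ⊔ cpl a b x := sup_le (le_sup_of_le_left le_sup_left) le_sup_right
      · calc b = y ⊔ cpl a b y := hy2.symm
          _ ≤ (x ⊔ y) ⊔ cpl a b y := sup_le (le_sup_of_le_left le_sup_right) le_sup_right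

lemma clos_inf {x y : L} (hx : x ∈ compS a b) (hy : y ∈ compS a b) :
    (x ⊓ y) ⊓ (cpl a b x ⊔ cpl a b y) = a ∧ (x ⊓ y) ⊔ (cpl a b x ⊔ cpl a b y) = b := by
  obtain ⟨hx1, hx2⟩ := mem_compS.1 hx
  obtain ⟨hy1, hy2⟩ := mem_compS.1 hy
  constructor
  · apply le_antisymm
    · rw [inf_sup_left]
      apply sup_le
      · calc (x ⊓ y) ⊓ cpl a b x ≤ x ⊓ cpl a b x := inf_le_inf_right _ inf_le_left
          _ = a := hx1
      · calc (x ⊓ y) ⊓ cpl a b y ≤ y ⊓ cpl a b y := inf_le_inf_right _ inf_le_right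
          _ = a := hy1
    · exact le_inf (le_inf (a_le hx) (a_le hy)) (le_sup_of_le_left (a_le_cpl hx))
  · apply le_antisymm
    · exact sup_le (inf_le_left.trans (le_b hx)) (sup_le (cpl_le_b hx) (cpl_le_b hy))
    · rw [sup_inf_right]
      refine le_inf ?_ ?_
      · calc b = x ⊔ cpl a b x := hx2.symm
          _ ≤ x ⊔ (cpl a b x ⊔ cpl a b y) := sup_le le_sup_left (le_sup_of_le_right le_sup_left)
      · calc b = y ⊔ cpl a b y := hy2.symm
          _ ≤ y ⊔ (cpl a b x ⊔ cpl a b y) := sup_le le_sup_left (le_sup_of_le_right le_sup_right)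

lemma compS_sup {x y : L} (hx : x ∈ compS a b) (hy : y ∈ compS a b) : x ⊔ y ∈ compS a b :=
  mem_compS'.2 ⟨_, (clos_sup hx hy).1, (clos_sup hx hy).2⟩

lemma compS_inf {x y : L} (hx : x ∈ compS a b) (hy : y ∈ compS a b) : x ⊓ y ∈ compS a b :=
  mem_compS'.2 ⟨_, (clos_inf hx hy).1, (clos_inf hx hy).2⟩

lemma cpl_sup {x y : L} (hx : x ∈ compS a b) (hy : y ∈ compS a b) :
    cpl a b (x ⊔ y) = cpl a b x ⊓ cpl a b y :=
  cpl_eq (clos_sup hx hy).1 (clos_sup hx hy).2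

lemma cpl_inf {x y : L} (hx : x ∈ compS a b) (hy : y ∈ compS a b) :
    cpl a b (x ⊓ y) = cpl a b x ⊔ cpl a b y :=
  cpl_eq (clos_inf hx hy).1 (clos_inf hx hy).2

lemma sum_invol (a b : L) (F : L → ℝ) :
    ∑ x ∈ compS a b, F (cpl a b x) = ∑ x ∈ compS a b, F x :=
  Finset.sum_nbij' (i := cpl a b) (j := cpl a b)
    (fun x hx => cpl_mem hx) (fun x hx => cpl_mem hx)
    (fun x hx => cpl_cpl hx) (fun x hx => cpl_cpl hx)
    (fun x _ => rfl)

lemma sum_fiber_eq (a b : L) (F : L × L → ℝ) :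
    ∑ p ∈ (univ ×ˢ univ : Finset (L × L)).filter
        (fun p => (p.1 ⊓ p.2, p.1 ⊔ p.2) = (a, b)), F p
      = ∑ x ∈ compS a b, F (x, cpl a b x) := by
  have hmemF : ∀ p : L × L,
      p ∈ (univ ×ˢ univ : Finset (L × L)).filter
        (fun p => (p.1 ⊓ p.2, p.1 ⊔ p.2) = (a, b)) ↔ (p.1 ⊓ p.2 = a ∧ p.1 ⊔ p.2 = b) := by
    intro p
    simp [Finset.mem_filter, Prod.ext_iff]
  refine Finset.sum_nbij' (i := fun p => p.1) (j := fun x => (x, cpl a b x)) ?_ ?_ ?_ ?_ ?_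
  · intro p hp
    obtain ⟨h1, h2⟩ := (hmemF p).1 hp
    exact mem_compS'.2 ⟨p.2, h1, h2⟩
  · intro x hx
    obtain ⟨h1, h2⟩ := mem_compS.1 hx
    exact (hmemF _).2 ⟨h1, h2⟩
  · intro p hp
    obtain ⟨h1, h2⟩ := (hmemF p).1 hp
    have : cpl a b p.1 = p.2 := cpl_eq h1 h2
    simp only [this]
  · intro x _
    rfl
  · intro p hp
    obtain ⟨h1, h2⟩ := (hmemF p).1 hp
    have : cpl a b p.1 = p.2 := cpl_eq h1 h2
    simp only [this]

lemma fiber_key [Nonempty L] (μ f g : L → ℝ)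
    (hμ : ∀ x, 0 ≤ μ x)
    (hlsm : ∀ x y : L, μ x * μ y ≤ μ (x ⊔ y) * μ (x ⊓ y))
    (hmono : (Monotone f ∧ Monotone g) ∨ (Antitone f ∧ Antitone g)) (a b : L) :
    ∑ p ∈ (univ ×ˢ univ : Finset (L × L)).filter
        (fun p => (p.1 ⊓ p.2, p.1 ⊔ p.2) = (a, b)), f p.1 * μ p.1 * (g p.2 * μ p.2)
      ≤ ∑ p ∈ (univ ×ˢ univ : Finset (L × L)).filter
        (fun p => (p.1 ⊓ p.2, p.1 ⊔ p.2) = (a, b)), μ p.1 * (f p.2 * g p.2 * μ p.2) := by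
  rw [sum_fiber_eq, sum_fiber_eq]
  set S := compS a b with hSdef
  set c : L → L := cpl a b with hcdef
  set ν : L → ℝ := fun x => μ x * μ (c x) with hνdef
  have hνinv : ∀ x ∈ S, ν (c x) = ν x := by
    intro x hx
    simp only [hνdef]
    rw [hcdef, cpl_cpl hx, mul_comm]
  have hν0S : ∀ x ∈ S, 0 ≤ ν x := fun x _ => mul_nonneg (hμ _) (hμ _)
  have hνlsm : ∀ x ∈ S, ∀ y ∈ S, ν x * ν y ≤ ν (x ⊓ y) * ν (x ⊔ y) := by
    intro x hx y hy
    have m1 := hlsm x y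
    have m2 := hlsm (c x) (c y)
    calc ν x * ν y = (μ x * μ y) * (μ (c x) * μ (c y)) := by simp only [hνdef]; ring
      _ ≤ (μ (x ⊔ y) * μ (x ⊓ y)) * (μ (c x ⊔ c y) * μ (c x ⊓ c y)) :=
          mul_le_mul m1 m2 (mul_nonneg (hμ _) (hμ _))
            (mul_nonneg (hμ _) (hμ _))
      _ = ν (x ⊓ y) * ν (x ⊔ y) := by
          simp only [hνdef, hcdef]
          rw [cpl_inf hx hy, cpl_sup hx hy]
          ring
  have hzero : ∀ h : L → ℝ, ∑ x ∈ S, ν x * (h x - h (c x)) = 0 := by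
    intro h
    have e : ∑ x ∈ S, ν x * h (c x) = ∑ x ∈ S, ν x * h x := by
      calc ∑ x ∈ S, ν x * h (c x) = ∑ x ∈ S, ν (c x) * h (c x) :=
            Finset.sum_congr rfl (fun x hx => by rw [hνinv x hx])
        _ = ∑ x ∈ S, ν x * h x := sum_invol a b (fun z => ν z * h z)
    rw [Finset.sum_congr rfl (fun x _ => mul_sub (ν x) (h x) (h (c x))),
      Finset.sum_sub_distrib, e, sub_self]
  have key : 0 ≤ ∑ x ∈ S, ν x * ((f x - f (c x)) * (g x - g (c x))) := by
    rcases hmono with ⟨hfm, hgm⟩ | ⟨hfm, hgm⟩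
    · refine fkg_zero S (fun x hx y hy => compS_inf hx hy) (fun x hx y hy => compS_sup hx hy)
        ν _ _ hν0S hνlsm ?_ ?_ (hzero f) (hzero g)
      · intro x hx y hy hxy
        have h1 := hfm hxy
        have h2 := hfm (cpl_anti hx hy hxy)
        linarith
      · intro x hx y hy hxy
        have h1 := hgm hxy
        have h2 := hgm (cpl_anti hx hy hxy)
        linarith
    · have hz : ∀ h : L → ℝ, ∑ x ∈ S, ν x * (h (c x) - h x) = 0 := by
        intro h
        have : ∑ x ∈ S, ν x * (h (c x) - h x) = -∑ x ∈ S, ν x * (h x - h (c x)) := by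
          rw [← Finset.sum_neg_distrib]
          exact Finset.sum_congr rfl fun x _ => by ring
        rw [this, hzero h, neg_zero]
      have key' := fkg_zero S (fun x hx y hy => compS_inf hx hy)
        (fun x hx y hy => compS_sup hx hy)
        ν (fun x => f (c x) - f x) (fun x => g (c x) - g x) hν0S hνlsm
        (fun x hx y hy hxy => by
          have h1 := hfm hxy
          have h2 := hfm (cpl_anti hx hy hxy)
          linarith)
        (fun x hx y hy hxy => by
          have h1 := hgm hxy
          have h2 := hgm (cpl_anti hx hy hxy)
          linarith)
        (hz f) (hz g)
      calc (0 : ℝ) ≤ ∑ x ∈ S, ν x * ((f (c x) - f x) * (g (c x) - g x)) := key'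
        _ = ∑ x ∈ S, ν x * ((f x - f (c x)) * (g x - g (c x))) :=
            Finset.sum_congr rfl fun x _ => by ring
  have eL : ∑ x ∈ S, f x * μ x * (g (c x) * μ (c x)) = ∑ x ∈ S, ν x * (f x * g (c x)) :=
    Finset.sum_congr rfl fun x _ => by simp only [hνdef]; ring
  have e1 : ∑ x ∈ S, ν x * (f (c x) * g (c x)) = ∑ x ∈ S, ν x * (f x * g x) := by
    calc ∑ x ∈ S, ν x * (f (c x) * g (c x)) = ∑ x ∈ S, ν (c x) * (f (c x) * g (c x)) :=
          Finset.sum_congr rfl (fun x hx => by rw [hνinv x hx])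
      _ = ∑ x ∈ S, ν x * (f x * g x) := sum_invol a b (fun z => ν z * (f z * g z))
  have eR : ∑ x ∈ S, μ x * (f (c x) * g (c x) * μ (c x)) = ∑ x ∈ S, ν x * (f x * g x) := by
    rw [← e1]
    exact Finset.sum_congr rfl fun x _ => by simp only [hνdef]; ring
  have e2 : ∑ x ∈ S, ν x * (f (c x) * g x) = ∑ x ∈ S, ν x * (f x * g (c x)) := by
    calc ∑ x ∈ S, ν x * (f (c x) * g x) = ∑ x ∈ S, ν (c x) * (f (c x) * g x) :=
          Finset.sum_congr rfl (fun x hx => by rw [hνinv x hx])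
      _ = ∑ x ∈ S, ν (c x) * (f (c x) * g (c (c x))) :=
          Finset.sum_congr rfl (fun x hx => by rw [hcdef, cpl_cpl hx])
      _ = ∑ x ∈ S, ν x * (f x * g (c x)) := sum_invol a b (fun z => ν z * (f z * g (c z)))
  have expand : ∑ x ∈ S, ν x * ((f x - f (c x)) * (g x - g (c x)))
      = (∑ x ∈ S, ν x * (f x * g x)) - (∑ x ∈ S, ν x * (f x * g (c x)))
        - (∑ x ∈ S, ν x * (f (c x) * g x)) + (∑ x ∈ S, ν x * (f (c x) * g (c x))) := by
    rw [← Finset.sum_sub_distrib, ← Finset.sum_sub_distrib, ← Finset.sum_add_distrib]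
    exact Finset.sum_congr rfl fun x _ => by ring
  rw [expand, e1, e2] at key
  rw [eL, eR]
  linarith


end QFKG

/-- Björner's q-analogue of the FKG inequality. -/
theorem q_fkg_inequality (L : Type*) [DistribLattice L] [Fintype L]
    (μ f g : L → ℝ)
    (hμ : ∀ x, 0 ≤ μ x) (hf : ∀ x, 0 ≤ f x) (hg : ∀ x, 0 ≤ g x)
    (hlsm : ∀ x y : L, μ x * μ y ≤ μ (x ⊔ y) * μ (x ⊓ y))
    (hmono : (Monotone f ∧ Monotone g) ∨ (Antitone f ∧ Antitone g)) :
    ∀ k : ℕ,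
      ((∑ x : L, C (f x * μ x) * X ^ latticeRank x) *
        (∑ x : L, C (g x * μ x) * X ^ latticeRank x)).coeff k ≤
      ((∑ x : L, C (μ x) * X ^ latticeRank x) *
        (∑ x : L, C (f x * g x * μ x) * X ^ latticeRank x)).coeff k := by
  classical
  intro k
  rcases isEmpty_or_nonempty L with hE | hNE
  · simp [Finset.univ_eq_empty]
  rw [QFKG.coeff_mul_sum latticeRank (fun x => f x * μ x) (fun x => g x * μ x) k,
    QFKG.coeff_mul_sum latticeRank μ (fun x => f x * g x * μ x) k]
  have part : ∀ F : L × L → ℝ, ∑ p ∈ (univ ×ˢ univ : Finset (L × L)), F p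
      = ∑ q ∈ (univ : Finset (L × L)),
          ∑ p ∈ (univ ×ˢ univ : Finset (L × L)).filter
            (fun p => (p.1 ⊓ p.2, p.1 ⊔ p.2) = q), F p :=
    fun F => (Finset.sum_fiberwise_of_maps_to (fun p _ => Finset.mem_univ _) F).symm
  rw [part, part]
  apply Finset.sum_le_sum
  intro q _
  obtain ⟨a, b⟩ := q
  have hconst : ∀ p ∈ (univ ×ˢ univ : Finset (L × L)).filter
      (fun p => (p.1 ⊓ p.2, p.1 ⊔ p.2) = (a, b)),
      latticeRank p.1 + latticeRank p.2 = latticeRank b + latticeRank a := by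
    intro p hp
    have h := (Finset.mem_filter.1 hp).2
    rw [Prod.ext_iff] at h
    obtain ⟨h1, h2⟩ := h
    simp only at h1 h2
    rw [QFKG.rank_modular p.1 p.2, h1, h2]
  by_cases hk : k = latticeRank b + latticeRank a
  · have hL : ∑ p ∈ (univ ×ˢ univ : Finset (L × L)).filter
        (fun p => (p.1 ⊓ p.2, p.1 ⊔ p.2) = (a, b)),
        (if k = latticeRank p.1 + latticeRank p.2 then f p.1 * μ p.1 * (g p.2 * μ p.2) else 0)
        = ∑ p ∈ (univ ×ˢ univ : Finset (L × L)).filter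
        (fun p => (p.1 ⊓ p.2, p.1 ⊔ p.2) = (a, b)), f p.1 * μ p.1 * (g p.2 * μ p.2) :=
      Finset.sum_congr rfl fun p hp => if_pos (hk.trans (hconst p hp).symm)
    have hR : ∑ p ∈ (univ ×ˢ univ : Finset (L × L)).filter
        (fun p => (p.1 ⊓ p.2, p.1 ⊔ p.2) = (a, b)),
        (if k = latticeRank p.1 + latticeRank p.2 then μ p.1 * (f p.2 * g p.2 * μ p.2) else 0)
        = ∑ p ∈ (univ ×ˢ univ : Finset (L × L)).filter
        (fun p => (p.1 ⊓ p.2, p.1 ⊔ p.2) = (a, b)), μ p.1 * (f p.2 * g p.2 * μ p.2) :=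
      Finset.sum_congr rfl fun p hp => if_pos (hk.trans (hconst p hp).symm)
    rw [hL, hR]
    exact QFKG.fiber_key μ f g hμ hlsm hmono a b
  · have hL : ∑ p ∈ (univ ×ˢ univ : Finset (L × L)).filter
        (fun p => (p.1 ⊓ p.2, p.1 ⊔ p.2) = (a, b)),
        (if k = latticeRank p.1 + latticeRank p.2 then f p.1 * μ p.1 * (g p.2 * μ p.2) else 0)
        = 0 :=
      Finset.sum_eq_zero fun p hp => if_neg fun hh => hk (hh.trans (hconst p hp))
    have hR : ∑ p ∈ (univ ×ˢ univ : Finset (L × L)).filter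
        (fun p => (p.1 ⊓ p.2, p.1 ⊔ p.2) = (a, b)),
        (if k = latticeRank p.1 + latticeRank p.2 then μ p.1 * (f p.2 * g p.2 * μ p.2) else 0)
        = 0 :=
      Finset.sum_eq_zero fun p hp => if_neg fun hh => hk (hh.trans (hconst p hp))
    rw [hL, hR]
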